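/- Let F be a field of characteristic zero and let B(t) = (t−α_1)···(t−α_n) ∈ F[t] have n distinct roots in a splitting field E of B over F. Then the following are equivalent: (1) there is a labeling α_1,…,α_n of the roots and a generator σ of Gal(E/F) such that Gal(E/F) is cyclic of order n and σ(α_i) = α_{i+1} for all i (indices mod n); (2) B is irreducible in F[t] and there exist a polynomial θ(t) ∈ F[t] and a labeling α_1,…,α_n of the roots such that θ(α_i) = α_{i+1} for all i = 1,…,n, with α_{n+1} = α_1. -/

import Mathlib

open Polynomial

section Aux

variable {F E : Type*} [Field F] [Field E] [Algebra F E]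

private lemma aux_basic {n : ℕ} [NeZero n] {B : F[X]} {α : ZMod n → E}
    (hB : B.map (algebraMap F E) = ∏ i, (X - C (α i))) :
    B.Monic ∧ B.natDegree = n ∧ ∀ i, aeval (α i) B = 0 := by
  have hmapm : (B.map (algebraMap F E)).Monic := by
    rw [hB]; exact monic_prod_of_monic _ _ fun i _ => monic_X_sub_C _
  have hmonic : B.Monic := (algebraMap F E).injective.monic_map_iff.mpr hmapm
  refine ⟨hmonic, ?_, ?_⟩
  · have h1 := natDegree_map_eq_of_injective (algebraMap F E).injective B
    rw [hB, natDegree_prod _ _ (fun i _ => X_sub_C_ne_zero (α i))] at h1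
    simp only [natDegree_X_sub_C, Finset.sum_const, Finset.card_univ, smul_eq_mul, mul_one,
      ZMod.card] at h1
    exact h1.symm
  · intro i
    have h2 : aeval (α i) B = eval (α i) (B.map (algebraMap F E)) := (eval_map _ _).symm
    rw [h2, hB, eval_prod]
    exact Finset.prod_eq_zero (Finset.mem_univ i) (by simp)

private lemma aux_pow_apply {n : ℕ} {α : ZMod n → E} {σ : E ≃ₐ[F] E}
    (hσ : ∀ i, σ (α i) = α (i + 1)) (k : ℕ) (j : ZMod n) :
    (σ ^ k) (α j) = α (j + k) := by
  induction k generalizing j with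
  | zero => simp
  | succ k ih =>
      have h : (σ ^ (k + 1)) (α j) = (σ ^ k) (σ (α j)) := by
        rw [pow_succ, AlgEquiv.mul_apply]
      rw [h, hσ, ih]
      congr 1
      push_cast
      ring

private lemma aux_theta_iter {n : ℕ} {θ : F[X]} {α : ZMod n → E}
    (hθ : ∀ i, aeval (α i) θ = α (i + 1)) (k : ℕ) (j : ZMod n) :
    (fun x : E => aeval x θ)^[k] (α j) = α (j + k) := by
  induction k generalizing j with
  | zero => simp
  | succ k ih =>
      rw [Function.iterate_succ_apply', ih, hθ]
      congr 1
      push_cast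
      ring

end Aux

theorem cyclic_iff_irreducible_and_root_cycle_polynomial
    (F E : Type*) [Field F] [Field E] [Algebra F E] [CharZero F]
    (n : ℕ) [NeZero n] (B : Polynomial F) [IsSplittingField F E B]
    (hroots : ∃ α : ZMod n → E, Function.Injective α ∧
      Polynomial.map (algebraMap F E) B = ∏ i, (X - C (α i))) :
    (∃ α : ZMod n → E, Function.Injective α ∧
        Polynomial.map (algebraMap F E) B = ∏ i, (X - C (α i)) ∧
        ∃ σ : E ≃ₐ[F] E, (∀ g : E ≃ₐ[F] E, g ∈ Subgroup.zpowers σ) ∧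
          Nat.card (E ≃ₐ[F] E) = n ∧ ∀ i : ZMod n, σ (α i) = α (i + 1)) ↔
      (Irreducible B ∧
        ∃ (θ : Polynomial F) (α : ZMod n → E), Function.Injective α ∧
          Polynomial.map (algebraMap F E) B = ∏ i, (X - C (α i)) ∧
          ∀ i : ZMod n, Polynomial.aeval (α i) θ = α (i + 1)) := by
  classical
  haveI : FiniteDimensional F E := IsSplittingField.finiteDimensional E B
  haveI : Normal F E := Normal.of_isSplittingField B
  haveI : IsGalois F E := ⟨⟩
  constructor
  · rintro ⟨α, hinj, hB, σ, hgen, hcard, hσ⟩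
    obtain ⟨hmonic, hdeg, hroot⟩ := aux_basic hB
    have hfr : Module.finrank F E = n := by
      rw [← IsGalois.card_aut_eq_finrank, hcard]
    have hint : IsIntegral F (α 0) := IsIntegral.of_finite F (α 0)
    have hval : ∀ i : ZMod n, α i = (σ ^ i.val) (α 0) := by
      intro i
      rw [aux_pow_apply hσ, zero_add, ZMod.natCast_zmod_val]
    have hmroot : ∀ i : ZMod n, aeval (α i) (minpoly F (α 0)) = 0 := by
      intro i
      rw [hval i]
      show aeval (((σ ^ i.val : E ≃ₐ[F] E) : E →ₐ[F] E) (α 0)) (minpoly F (α 0)) = 0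
      rw [aeval_algHom_apply, minpoly.aeval, map_zero]
    have hle : n ≤ (minpoly F (α 0)).natDegree := by
      have hne : (minpoly F (α 0)).map (algebraMap F E) ≠ 0 :=
        (Polynomial.map_ne_zero_iff (algebraMap F E).injective).mpr (minpoly.ne_zero hint)
      have hsub : Finset.image α Finset.univ ⊆
          ((minpoly F (α 0)).map (algebraMap F E)).roots.toFinset := by
        intro y hy
        obtain ⟨i, _, rfl⟩ := Finset.mem_image.mp hy
        rw [Multiset.mem_toFinset, mem_roots hne, IsRoot.def, eval_map, ← aeval_def]
        exact hmroot i
      calc n = Fintype.card (ZMod n) := (ZMod.card n).symm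
        _ = (Finset.image α Finset.univ).card := by
              rw [Finset.card_image_of_injective _ hinj, Finset.card_univ]
        _ ≤ ((minpoly F (α 0)).map (algebraMap F E)).roots.toFinset.card :=
              Finset.card_le_card hsub
        _ ≤ Multiset.card ((minpoly F (α 0)).map (algebraMap F E)).roots :=
              Multiset.toFinset_card_le _
        _ ≤ ((minpoly F (α 0)).map (algebraMap F E)).natDegree := card_roots' _
        _ = (minpoly F (α 0)).natDegree :=
              natDegree_map_eq_of_injective (algebraMap F E).injective _
    have hBm : B = minpoly F (α 0) := by
      refine eq_of_monic_of_dvd_of_natDegree_le (minpoly.monic hint) hmonic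
        (minpoly.dvd F (α 0) (hroot 0)) ?_
      rw [hdeg]; exact hle
    have hirr : Irreducible B := hBm ▸ minpoly.irreducible hint
    have h1 : Module.finrank F (IntermediateField.adjoin F ({α 0} : Set E)) = n := by
      rw [IntermediateField.adjoin.finrank hint, ← hBm, hdeg]
    have h2 : IntermediateField.adjoin F ({α 0} : Set E) = ⊤ :=
      IntermediateField.eq_of_le_of_finrank_eq le_top (by
        rw [h1, IntermediateField.finrank_top', hfr])
    have hadj : Algebra.adjoin F ({α 0} : Set E) = ⊤ := by
      have h3 := IntermediateField.adjoin_simple_toSubalgebra_of_isAlgebraic hint.isAlgebraic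
      rw [h2] at h3
      rw [← h3]
      rfl
    have hmem : α 1 ∈ Algebra.adjoin F ({α 0} : Set E) := by rw [hadj]; trivial
    rw [Algebra.adjoin_singleton_eq_range_aeval] at hmem
    obtain ⟨θ, hθ0'⟩ := hmem
    have hθ0 : aeval (α 0) θ = α 1 := hθ0'
    refine ⟨hirr, θ, α, hinj, hB, ?_⟩
    intro i
    rw [hval i]
    show aeval (((σ ^ i.val : E ≃ₐ[F] E) : E →ₐ[F] E) (α 0)) θ = α (i + 1)
    rw [aeval_algHom_apply, hθ0]
    show (σ ^ i.val) (α 1) = α (i + 1)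
    rw [aux_pow_apply hσ]
    congr 1
    rw [ZMod.natCast_zmod_val]
    ring
  · rintro ⟨hirr, θ, α, hinj, hB, hθ⟩
    obtain ⟨hmonic, hdeg, hroot⟩ := aux_basic hB
    have hmin : ∀ i : ZMod n, minpoly F (α i) = B := fun i =>
      (minpoly.eq_of_irreducible_of_monic hirr (hroot i) hmonic).symm
    obtain ⟨σ, hσ0⟩ := minpoly.exists_algEquiv_of_root (K := F)
      (Algebra.IsAlgebraic.isAlgebraic (α 1)) (by rw [hmin 1]; exact hroot 0)
    have hsemi : Function.Semiconj σ (fun x : E => aeval x θ) (fun x : E => aeval x θ) := by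
      intro x
      have h := aeval_algHom_apply (σ : E →ₐ[F] E) x θ
      simp only [AlgEquiv.coe_algHom] at h
      exact h.symm
    have hval : ∀ i : ZMod n, α i = (fun x : E => aeval x θ)^[i.val] (α 0) := by
      intro i
      rw [aux_theta_iter hθ, zero_add, ZMod.natCast_zmod_val]
    have hσ : ∀ i : ZMod n, σ (α i) = α (i + 1) := by
      intro i
      rw [hval i, hsemi.iterate_right i.val (α 0), hσ0, aux_theta_iter hθ]
      congr 1
      rw [ZMod.natCast_zmod_val]
      ring
    have hstepmem : ∀ (x : E) (S : Subalgebra F E), x ∈ S → aeval x θ ∈ S := by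
      intro x S hx
      have h1 : aeval x θ ∈ Algebra.adjoin F ({x} : Set E) := by
        rw [Algebra.adjoin_singleton_eq_range_aeval]; exact ⟨θ, rfl⟩
      exact Algebra.adjoin_le (Set.singleton_subset_iff.mpr hx) h1
    have hitermem : ∀ k : ℕ, (fun x : E => aeval x θ)^[k] (α 0) ∈
        Algebra.adjoin F ({α 0} : Set E) := by
      intro k
      induction k with
      | zero => exact Algebra.subset_adjoin rfl
      | succ k ih => rw [Function.iterate_succ_apply']; exact hstepmem _ _ ih
    have hexists : ∀ y ∈ B.rootSet E, ∃ i : ZMod n, y = α i := by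
      intro y hy
      have h0 : aeval y B = 0 := (mem_rootSet.mp hy).2
      have h1 : eval y (B.map (algebraMap F E)) = 0 := by
        rw [eval_map, ← aeval_def]; exact h0
      rw [hB, eval_prod] at h1
      obtain ⟨i, _, hi⟩ := Finset.prod_eq_zero_iff.mp h1
      simp only [eval_sub, eval_X, eval_C, sub_eq_zero] at hi
      exact ⟨i, hi⟩
    have hadj : Algebra.adjoin F ({α 0} : Set E) = ⊤ := by
      rw [← IsSplittingField.adjoin_rootSet E B]
      refine le_antisymm (Algebra.adjoin_mono ?_) (Algebra.adjoin_le ?_)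
      · intro y hy
        rw [Set.mem_singleton_iff] at hy
        subst hy
        show α 0 ∈ B.rootSet E
        exact mem_rootSet.mpr ⟨hmonic.ne_zero, hroot 0⟩
      · intro y hy
        obtain ⟨i, rfl⟩ := hexists y hy
        rw [hval i]
        exact hitermem i.val
    have hint : IsIntegral F (α 0) := IsIntegral.of_finite F (α 0)
    have hadjIF : IntermediateField.adjoin F ({α 0} : Set E) = ⊤ :=
      IntermediateField.adjoin_eq_top_of_algebra (F := F) (S := ({α 0} : Set E)) hadj
    have hfr : Module.finrank F E = n := by
      have h1 := IntermediateField.adjoin.finrank hint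
      rw [hadjIF, hmin 0, hdeg, IntermediateField.finrank_top'] at h1
      exact h1
    have hcard : Nat.card (E ≃ₐ[F] E) = n := by
      rw [IsGalois.card_aut_eq_finrank, hfr]
    have hpow : ∀ k : ℕ, (σ ^ k) (α 0) = α k := fun k => by
      rw [aux_pow_apply hσ, zero_add]
    have hndvd : n ∣ orderOf σ := by
      have h1 : (σ ^ orderOf σ) (α 0) = α 0 := by rw [pow_orderOf_eq_one]; simp
      rw [hpow] at h1
      exact (ZMod.natCast_eq_zero_iff _ _).mp (hinj h1)
    have horder : orderOf σ = n :=
      Nat.dvd_antisymm (hcard ▸ orderOf_dvd_natCard σ) hndvd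
    have hgen : ∀ g : E ≃ₐ[F] E, g ∈ Subgroup.zpowers σ := by
      have h1 : Subgroup.zpowers σ = ⊤ := by
        apply (Subgroup.card_eq_iff_eq_top (Subgroup.zpowers σ)).mp
        rw [Nat.card_zpowers, horder, hcard]
      intro g; rw [h1]; trivial
    exact ⟨α, hinj, hB, σ, hgen, hcard, hσ⟩
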